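/- Let A be a Hermitian N₁×N₁ complex matrix with exactly c eigenvalues (with multiplicity) ≤ −1/2 and the remaining eigenvalues ≥ 1/2, and let B be a Hermitian N₂×N₂ matrix with all eigenvalues in [−1/4, 1/4]. Let C = A ⊕ B acting on ℂ^{N₁} ⊕ ℂ^{N₂}. Then the eigenspace of C for the eigenvalue λ_c(C) equals {0} ⊕ ker(B − λ_0(B)·I). Consequently, for every unit vector u ∈ ℂ^{N₂}, ‖Π_c (0 ⊕ u)‖² = ‖Π₀^B u‖², where Π_c is the orthogonal projector onto the λ_c(C)-eigenspace of C and Π₀^B is the orthogonal projector onto the ground space of B; in particular, if a guiding state u has squared overlap at least δ with the ground space of B, then 0 ⊕ u has squared overlap at least δ with the λ_c(C)-eigenspace of C. -/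

import Mathlib

/-- Eigenvalues of a Hermitian matrix, listed in non-decreasing order with multiplicity
(junk value `0` for non-Hermitian matrices). -/
noncomputable def eigs {N : ℕ} (A : Matrix (Fin N) (Fin N) ℂ) : Fin N → ℝ :=
  if hA : A.IsHermitian then hA.eigenvalues ∘ Tuple.sort hA.eigenvalues else 0

/-- The block-diagonal matrix `A ⊕ B`. -/
noncomputable def blockDiag {N₁ N₂ : ℕ} (A : Matrix (Fin N₁) (Fin N₁) ℂ)
    (B : Matrix (Fin N₂) (Fin N₂) ℂ) : Matrix (Fin (N₁ + N₂)) (Fin (N₁ + N₂)) ℂ :=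
  Matrix.reindex finSumFinEquiv finSumFinEquiv (Matrix.fromBlocks A 0 0 B)

/-- The eigenspace of a matrix for the (real) eigenvalue `μ`, as a subspace of
Euclidean space. -/
noncomputable def eigSpace {N : ℕ} (A : Matrix (Fin N) (Fin N) ℂ) (μ : ℝ) :
    Submodule ℂ (EuclideanSpace ℂ (Fin N)) :=
  Module.End.eigenspace (Matrix.toEuclideanLin A) (μ : ℂ)

/-- The embedding `u ↦ 0 ⊕ u` of `ℂ^{N₂}` into `ℂ^{N₁} ⊕ ℂ^{N₂}`. -/
def embed₂ {N₁ N₂ : ℕ} (u : EuclideanSpace ℂ (Fin N₂)) :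
    EuclideanSpace ℂ (Fin (N₁ + N₂)) :=
  WithLp.toLp 2 (Fin.append (0 : Fin N₁ → ℂ) u)

section Helpers

open Matrix Polynomial Finset

lemma map_univ_comp_equiv {α β γ : Type*} [Fintype α] [Fintype β] [DecidableEq β]
    (f : β → γ) (e : α ≃ β) :
    Multiset.map (f ∘ e) Finset.univ.val = Multiset.map f Finset.univ.val := by
  rw [← Multiset.map_map, ← Finset.map_univ_equiv e]; rfl

lemma det_smul_one_sub_hermitian {n : Type*} [Fintype n] [DecidableEq n]
    {A : Matrix n n ℂ} (hA : A.IsHermitian) (z : ℂ) :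
    (z • (1 : Matrix n n ℂ) - A).det = ∏ i, (z - (hA.eigenvalues i : ℂ)) := by
  set U : Matrix n n ℂ := (hA.eigenvectorUnitary : Matrix n n ℂ)
  have hU : U * star U = 1 := Matrix.mem_unitaryGroup_iff.mp hA.eigenvectorUnitary.2
  have h1 : z • (1 : Matrix n n ℂ) - A
      = U * (z • 1 - diagonal (RCLike.ofReal ∘ hA.eigenvalues)) * star U := by
    rw [mul_sub, sub_mul]
    congr 1
    · rw [mul_smul_comm, smul_mul_assoc, mul_one, hU]
    · exact hA.spectral_theorem
  have h2 : U.det * (star U).det = 1 := by rw [← det_mul, hU, det_one]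
  rw [h1, det_mul, det_mul, mul_right_comm, h2, one_mul,
    smul_one_eq_diagonal, diagonal_sub, det_diagonal]
  rfl

lemma eigs_monotone {N : ℕ} {A : Matrix (Fin N) (Fin N) ℂ} (hA : A.IsHermitian) :
    Monotone (eigs A) := by
  rw [eigs, dif_pos hA]; exact Tuple.monotone_sort _

lemma eigs_multiset {N : ℕ} {A : Matrix (Fin N) (Fin N) ℂ} (hA : A.IsHermitian) :
    Multiset.map (eigs A) Finset.univ.val = Multiset.map hA.eigenvalues Finset.univ.val := by
  rw [eigs, dif_pos hA]; exact map_univ_comp_equiv _ _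

lemma blockDiag_isHermitian {N₁ N₂ : ℕ} {A : Matrix (Fin N₁) (Fin N₁) ℂ}
    {B : Matrix (Fin N₂) (Fin N₂) ℂ} (hA : A.IsHermitian) (hB : B.IsHermitian) :
    (_root_.blockDiag A B).IsHermitian :=
  (hA.fromBlocks (by simp) hB).submatrix _

lemma eigen_value_mem {n : Type*} [Fintype n] [DecidableEq n] {A : Matrix n n ℂ}
    (hA : A.IsHermitian) {μ : ℝ} {v : n → ℂ} (hv : v ≠ 0)
    (h : A.mulVec v = (μ : ℂ) • v) : ∃ i, μ = hA.eigenvalues i := by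
  have hdet : ((μ : ℂ) • (1 : Matrix n n ℂ) - A).det = 0 := by
    rw [← Matrix.exists_mulVec_eq_zero_iff]
    exact ⟨v, hv, by rw [sub_mulVec, smul_mulVec, one_mulVec, h, sub_self]⟩
  rw [det_smul_one_sub_hermitian hA, Finset.prod_eq_zero_iff] at hdet
  obtain ⟨i, -, hi⟩ := hdet
  exact ⟨i, by exact_mod_cast sub_eq_zero.mp hi⟩

lemma roots_prod_linear {n : ℕ} (f : Fin n → ℂ) :
    (∏ i, (X - C (f i))).roots = Multiset.map f Finset.univ.val := by
  have : (Multiset.map (fun i => X - C (f i)) Finset.univ.val)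
      = Multiset.map (fun a => X - C a) (Multiset.map f Finset.univ.val) := by
    rw [Multiset.map_map]; rfl
  rw [Finset.prod_eq_multiset_prod, this, Polynomial.roots_multiset_prod_X_sub_C]

lemma blockDiag_eigs_multiset {N₁ N₂ : ℕ} {A : Matrix (Fin N₁) (Fin N₁) ℂ}
    {B : Matrix (Fin N₂) (Fin N₂) ℂ} (hA : A.IsHermitian) (hB : B.IsHermitian) :
    Multiset.map (eigs (_root_.blockDiag A B)) Finset.univ.val
      = Multiset.map (eigs A) Finset.univ.val + Multiset.map (eigs B) Finset.univ.val := by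
  have hC := blockDiag_isHermitian hA hB
  have hdet : ∀ z : ℂ, (∏ k, (z - (hC.eigenvalues k : ℂ)))
      = (∏ i, (z - (hA.eigenvalues i : ℂ))) * ∏ j, (z - (hB.eigenvalues j : ℂ)) := by
    intro z
    rw [← det_smul_one_sub_hermitian hA, ← det_smul_one_sub_hermitian hB,
      ← det_smul_one_sub_hermitian hC]
    have h2 : z • (1 : Matrix (Fin N₁ ⊕ Fin N₂) (Fin N₁ ⊕ Fin N₂) ℂ)
        - Matrix.fromBlocks A 0 0 B
        = Matrix.fromBlocks (z • 1 - A) 0 0 (z • 1 - B) := by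
      rw [← Matrix.fromBlocks_one, Matrix.fromBlocks_smul, sub_eq_add_neg,
        Matrix.fromBlocks_neg, Matrix.fromBlocks_add]
      simp [sub_eq_add_neg]
    have h1 : z • (1 : Matrix (Fin (N₁ + N₂)) (Fin (N₁ + N₂)) ℂ) - _root_.blockDiag A B
        = Matrix.reindex finSumFinEquiv finSumFinEquiv
            (Matrix.fromBlocks (z • 1 - A) 0 0 (z • 1 - B)) := by
      rw [← h2, _root_.blockDiag]
      ext i j
      simp [Matrix.reindex_apply, Matrix.submatrix_apply, Matrix.sub_apply,
        Matrix.smul_apply, Matrix.one_apply, EmbeddingLike.apply_eq_iff_eq]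
    rw [h1, Matrix.det_reindex_self, Matrix.det_fromBlocks_zero₂₁]
  have hpoly : (∏ k, (X - C ((hC.eigenvalues k : ℂ))))
      = (∏ i, (X - C ((hA.eigenvalues i : ℂ)))) * ∏ j, (X - C ((hB.eigenvalues j : ℂ))) := by
    apply Polynomial.funext
    intro z
    simpa [eval_prod] using hdet z
  have hroots := congrArg Polynomial.roots hpoly
  rw [Polynomial.roots_mul (mul_ne_zero
      (Polynomial.monic_prod_of_monic _ _ fun i _ => monic_X_sub_C _).ne_zero
      (Polynomial.monic_prod_of_monic _ _ fun i _ => monic_X_sub_C _).ne_zero),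
    roots_prod_linear, roots_prod_linear, roots_prod_linear] at hroots
  have hinj : Function.Injective (fun r : ℝ => (r : ℂ)) := Complex.ofReal_injective
  apply Multiset.map_injective hinj
  rw [Multiset.map_add]
  have key : ∀ {m : ℕ} (M : Matrix (Fin m) (Fin m) ℂ) (hM : M.IsHermitian),
      Multiset.map (fun r : ℝ => (r : ℂ)) (Multiset.map (eigs M) Finset.univ.val)
        = Multiset.map (fun k => (hM.eigenvalues k : ℂ)) Finset.univ.val := by
    intro m M hM
    rw [eigs_multiset hM, Multiset.map_map]
    rfl
  rw [key _ hC, key _ hA, key _ hB, hroots]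

lemma map_univ_sum_elim {α β γ : Type*} [Fintype α] [Fintype β]
    (f : α → γ) (g : β → γ) :
    Multiset.map (Sum.elim f g) (Finset.univ : Finset (α ⊕ β)).val
      = Multiset.map f Finset.univ.val + Multiset.map g Finset.univ.val := by
  rw [← Finset.univ_disjSum_univ, Finset.val_disjSum, Multiset.disjSum,
    Multiset.map_add, Multiset.map_map, Multiset.map_map]
  rfl

lemma monotone_tuple_unique {n : ℕ} {f g : Fin n → ℝ} (hf : Monotone f) (hg : Monotone g)
    (h : Multiset.map f Finset.univ.val = Multiset.map g Finset.univ.val) : f = g := by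
  have hl : List.ofFn f = List.ofFn g := by
    apply List.Perm.eq_of_sortedLE (List.sortedLE_ofFn_iff.2 hf) (List.sortedLE_ofFn_iff.2 hg)
    rw [← Multiset.coe_eq_coe]
    have huniv : (Finset.univ : Finset (Fin n)).val = (↑(List.finRange n) : Multiset (Fin n)) := by
      rw [Fin.univ_def]
    rw [huniv] at h
    simpa [List.ofFn_eq_map] using h
  funext i
  have := congrArg (fun l => l.getD i 0) hl
  simpa [List.getD_eq_getElem?_getD, List.getElem?_ofFn, i.isLt] using this

set_option linter.unusedTactic false in
set_option linter.unreachableTactic false in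
lemma eigs_blockDiag_at_c {N₁ N₂ c : ℕ} (hc : c ≤ N₁) (hN₂ : 0 < N₂)
    {A : Matrix (Fin N₁) (Fin N₁) ℂ} (hA : A.IsHermitian)
    {B : Matrix (Fin N₂) (Fin N₂) ℂ} (hB : B.IsHermitian)
    (hAneg : ∀ i : Fin N₁, (i : ℕ) < c → eigs A i ≤ -(1 / 2))
    (hApos : ∀ i : Fin N₁, c ≤ (i : ℕ) → (1 / 2 : ℝ) ≤ eigs A i)
    (hBsmall : ∀ j : Fin N₂, eigs B j ∈ Set.Icc (-(1 / 4) : ℝ) (1 / 4)) :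
    eigs (_root_.blockDiag A B) ⟨c, by have := hc; omega⟩ = eigs B ⟨0, hN₂⟩ := by
  have hC := blockDiag_isHermitian hA hB
  set g : Fin (N₁ + N₂) → ℝ := fun k =>
    if h : (k : ℕ) < c then eigs A ⟨k, by omega⟩
    else if h2 : (k : ℕ) < c + N₂ then eigs B ⟨(k : ℕ) - c, by omega⟩
    else eigs A ⟨(k : ℕ) - N₂, by omega⟩ with hg
  have hinj : Function.Injective (fun s : Fin N₁ ⊕ Fin N₂ =>
      (Sum.elim (fun i : Fin N₁ => if (i : ℕ) < c then (⟨i, by omega⟩ : Fin (N₁ + N₂))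
          else ⟨(i : ℕ) + N₂, by omega⟩)
        (fun j : Fin N₂ => (⟨c + (j : ℕ), by omega⟩ : Fin (N₁ + N₂))) s)) := by
    rintro (i | j) (i' | j') h <;> simp only [Sum.elim_inl, Sum.elim_inr] at h
    · split_ifs at h with h1 h2 h2 <;>
        (have := congrArg (fun x : Fin (N₁ + N₂) => (x : ℕ)) h; simp at this;
         exact congrArg Sum.inl (Fin.ext (by omega)))
    · split_ifs at h with h1 <;>
        (have := congrArg (fun x : Fin (N₁ + N₂) => (x : ℕ)) h; simp at this; omega)
    · split_ifs at h with h1 <;>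
        (have := congrArg (fun x : Fin (N₁ + N₂) => (x : ℕ)) h; simp at this; omega)
    · have := congrArg (fun x : Fin (N₁ + N₂) => (x : ℕ)) h; simp at this
      exact congrArg Sum.inr (Fin.ext (by omega))
  have hbij : Function.Bijective _ :=
    (Fintype.bijective_iff_injective_and_card _).2 ⟨hinj, by simp⟩
  set e := Equiv.ofBijective _ hbij with he
  have hge : g ∘ e = Sum.elim (eigs A) (eigs B) := by
    funext s
    rcases s with i | j
    · simp only [Function.comp_apply, he, Equiv.ofBijective_apply, Sum.elim_inl]
      by_cases h1 : (i : ℕ) < c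
      · rw [if_pos h1, hg]
        simp only [dif_pos h1]
        all_goals exact congrArg (eigs A) (Fin.ext (by simp))
      · rw [if_neg h1, hg]
        have h2 : ¬ ((i : ℕ) + N₂ < c) := by omega
        have h3 : ¬ ((i : ℕ) + N₂ < c + N₂) := by omega
        simp only [dif_neg h2, dif_neg h3]
        all_goals exact congrArg (eigs A) (Fin.ext (by simp))
    · simp only [Function.comp_apply, he, Equiv.ofBijective_apply, Sum.elim_inr]
      rw [hg]
      have h1 : ¬ (c + (j : ℕ) < c) := by omega
      have h2 : c + (j : ℕ) < c + N₂ := by omega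
      simp only [dif_neg h1, dif_pos h2]
      all_goals exact congrArg (eigs B) (Fin.ext (by simp))
  have hgmono : Monotone g := by
    intro k l hkl
    have hkl' : (k : ℕ) ≤ (l : ℕ) := hkl
    simp only [hg]
    have hAm := eigs_monotone hA
    have hBm := eigs_monotone hB
    by_cases h1 : (k : ℕ) < c
    · rw [dif_pos h1]
      by_cases h2 : (l : ℕ) < c
      · rw [dif_pos h2]; exact hAm (by simp; omega)
      · rw [dif_neg h2]
        have hk : eigs A ⟨k, by omega⟩ ≤ -(1/2) := hAneg _ (by simpa using h1)
        by_cases h3 : (l : ℕ) < c + N₂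
        · rw [dif_pos h3]
          have := (hBsmall ⟨(l : ℕ) - c, by omega⟩).1
          linarith
        · rw [dif_neg h3]
          have := hApos ⟨(l : ℕ) - N₂, by omega⟩ (by simp; omega)
          linarith
    · rw [dif_neg h1]
      by_cases h2 : (k : ℕ) < c + N₂
      · rw [dif_pos h2]
        have h3 : ¬ ((l : ℕ) < c) := by omega
        rw [dif_neg h3]
        by_cases h4 : (l : ℕ) < c + N₂
        · rw [dif_pos h4]; exact hBm (by simp; omega)
        · rw [dif_neg h4]
          have := (hBsmall ⟨(k : ℕ) - c, by omega⟩).2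
          have := hApos ⟨(l : ℕ) - N₂, by omega⟩ (by simp; omega)
          linarith
      · rw [dif_neg h2]
        have h3 : ¬ ((l : ℕ) < c) := by omega
        have h4 : ¬ ((l : ℕ) < c + N₂) := by omega
        rw [dif_neg h3, dif_neg h4]
        exact hAm (by simp; omega)
  have hmult : Multiset.map (eigs (_root_.blockDiag A B)) Finset.univ.val
      = Multiset.map g Finset.univ.val := by
    rw [blockDiag_eigs_multiset hA hB, ← map_univ_sum_elim, ← hge, map_univ_comp_equiv]
  have heq : eigs (_root_.blockDiag A B) = g :=
    monotone_tuple_unique (eigs_monotone hC) hgmono hmult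
  rw [heq]
  simp only [hg]
  have h1 : ¬ (c < c) := lt_irrefl c
  simp only [dif_neg h1, dif_pos (show c < c + N₂ by omega)]
  all_goals exact congrArg (eigs B) (Fin.ext (by simp))

end Helpers

lemma append_eq_elim {N₁ N₂ : ℕ} (a : Fin N₁ → ℂ) (b : Fin N₂ → ℂ) :
    Fin.append a b = Sum.elim a b ∘ ⇑finSumFinEquiv.symm := by
  funext k
  have hk : finSumFinEquiv (finSumFinEquiv.symm k) = k := Equiv.apply_symm_apply _ _
  rcases hs : finSumFinEquiv.symm k with i | j
  · rw [hs] at hk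
    rw [← hk, Function.comp_apply, Equiv.symm_apply_apply, finSumFinEquiv_apply_left,
      Fin.append_left, Sum.elim_inl]
  · rw [hs] at hk
    rw [← hk, Function.comp_apply, Equiv.symm_apply_apply, finSumFinEquiv_apply_right,
      Fin.append_right, Sum.elim_inr]

lemma mem_eigSpace_iff {N : ℕ} (M : Matrix (Fin N) (Fin N) ℂ) (μ : ℝ)
    (x : EuclideanSpace ℂ (Fin N)) :
    x ∈ eigSpace M μ ↔ M.mulVec x = ((μ : ℝ) : ℂ) • x := by
  rw [eigSpace, Module.End.mem_eigenspace_iff]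
  rw [Matrix.toEuclideanLin_apply]
  exact ⟨fun h => congrArg WithLp.ofLp h, fun h => congrArg (WithLp.toLp 2) h⟩

noncomputable def embedL (N₁ N₂ : ℕ) :
    EuclideanSpace ℂ (Fin N₂) →ₗ[ℂ] EuclideanSpace ℂ (Fin (N₁ + N₂)) where
  toFun u := embed₂ (N₁ := N₁) u
  map_add' u v := by
    ext k
    show Fin.append (0 : Fin N₁ → ℂ) (u + v) k
      = Fin.append (0 : Fin N₁ → ℂ) u k + Fin.append (0 : Fin N₁ → ℂ) v k
    rw [append_eq_elim, append_eq_elim, append_eq_elim]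
    rcases hs : finSumFinEquiv.symm k with i | j <;> simp [hs]
  map_smul' z u := by
    ext k
    show Fin.append (0 : Fin N₁ → ℂ) (z • u) k = z • Fin.append (0 : Fin N₁ → ℂ) u k
    rw [append_eq_elim, append_eq_elim]
    rcases hs : finSumFinEquiv.symm k with i | j <;> simp [hs]

lemma inner_embed {N₁ N₂ : ℕ} (x y : EuclideanSpace ℂ (Fin N₂)) :
    (inner ℂ (embed₂ (N₁ := N₁) x) (embed₂ (N₁ := N₁) y) : ℂ) = inner ℂ x y := by
  simp only [PiLp.inner_apply, RCLike.inner_apply]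
  rw [Fin.sum_univ_add]
  simp [embed₂, Fin.append_left, Fin.append_right]

lemma norm_embed {N₁ N₂ : ℕ} (x : EuclideanSpace ℂ (Fin N₂)) :
    ‖embed₂ (N₁ := N₁) x‖ = ‖x‖ := by
  have h := inner_embed (N₁ := N₁) x x
  rw [inner_self_eq_norm_sq_to_K, inner_self_eq_norm_sq_to_K] at h
  have h' : (‖embed₂ (N₁ := N₁) x‖ : ℝ) ^ 2 = ‖x‖ ^ 2 := by exact_mod_cast h
  nlinarith [norm_nonneg (embed₂ (N₁ := N₁) x), norm_nonneg x]

theorem blockDiag_eigenspace_and_overlap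
    (N₁ N₂ c : ℕ) (hc : c ≤ N₁) (hN₂ : 0 < N₂)
    (A : Matrix (Fin N₁) (Fin N₁) ℂ) (hA : A.IsHermitian)
    (B : Matrix (Fin N₂) (Fin N₂) ℂ) (hB : B.IsHermitian)
    (hAneg : ∀ i : Fin N₁, (i : ℕ) < c → eigs A i ≤ -(1 / 2))
    (hApos : ∀ i : Fin N₁, c ≤ (i : ℕ) → (1 / 2 : ℝ) ≤ eigs A i)
    (hBsmall : ∀ j : Fin N₂, eigs B j ∈ Set.Icc (-(1 / 4) : ℝ) (1 / 4)) :
    ({v : Fin (N₁ + N₂) → ℂ |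
        (blockDiag A B).mulVec v
          = ((eigs (blockDiag A B) ⟨c, by omega⟩ : ℝ) : ℂ) • v}
      = (fun u : Fin N₂ → ℂ => Fin.append (0 : Fin N₁ → ℂ) u) ''
          {u : Fin N₂ → ℂ | B.mulVec u = ((eigs B ⟨0, hN₂⟩ : ℝ) : ℂ) • u}) ∧
    (∀ u : EuclideanSpace ℂ (Fin N₂), ‖u‖ = 1 →
      ‖Submodule.orthogonalProjectionOnto
          (eigSpace (blockDiag A B) (eigs (blockDiag A B) ⟨c, by omega⟩))
          (embed₂ (N₁ := N₁) u)‖ ^ 2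
        = ‖Submodule.orthogonalProjectionOnto (eigSpace B (eigs B ⟨0, hN₂⟩)) u‖ ^ 2) ∧
    (∀ (δ : ℝ) (u : EuclideanSpace ℂ (Fin N₂)), ‖u‖ = 1 →
      δ ≤ ‖Submodule.orthogonalProjectionOnto (eigSpace B (eigs B ⟨0, hN₂⟩)) u‖ ^ 2 →
      δ ≤ ‖Submodule.orthogonalProjectionOnto
            (eigSpace (blockDiag A B) (eigs (blockDiag A B) ⟨c, by omega⟩))
            (embed₂ (N₁ := N₁) u)‖ ^ 2) := by
  have hμC : eigs (blockDiag A B) ⟨c, by omega⟩ = eigs B ⟨0, hN₂⟩ :=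
    eigs_blockDiag_at_c hc hN₂ hA hB hAneg hApos hBsmall
  set μ : ℝ := eigs B ⟨0, hN₂⟩ with hμdef
  -- A has no eigenvector with eigenvalue μ
  have hAnone : ∀ x : Fin N₁ → ℂ, A.mulVec x = (μ : ℂ) • x → x = 0 := by
    intro x hx
    by_contra hxne
    obtain ⟨i, hi⟩ := eigen_value_mem hA hxne hx
    have hk : hA.eigenvalues i = eigs A ((Tuple.sort hA.eigenvalues).symm i) := by
      rw [eigs, dif_pos hA, Function.comp_apply, Equiv.apply_symm_apply]
    have hb := hBsmall ⟨0, hN₂⟩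
    rw [Set.mem_Icc] at hb
    rcases lt_or_ge (((Tuple.sort hA.eigenvalues).symm i : Fin N₁) : ℕ) c with h | h
    · have h2 := hAneg _ h
      rw [← hk, ← hi] at h2
      have hb1 : -(1/4 : ℝ) ≤ μ := hb.1
      linarith
    · have h2 := hApos _ h
      rw [← hk, ← hi] at h2
      have hb2 : μ ≤ (1/4 : ℝ) := hb.2
      linarith
  -- mulVec through the reindexing
  have hmv : ∀ v : Fin (N₁ + N₂) → ℂ,
      (blockDiag A B).mulVec v
        = ((Matrix.fromBlocks A 0 0 B).mulVec (v ∘ ⇑finSumFinEquiv)) ∘ ⇑finSumFinEquiv.symm := by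
    intro v
    rw [blockDiag, Matrix.reindex_apply, Matrix.submatrix_mulVec_equiv]
    simp only [Equiv.symm_symm]
  -- Part 1: the set equality
  have hset : ({v : Fin (N₁ + N₂) → ℂ |
        (blockDiag A B).mulVec v
          = ((eigs (blockDiag A B) ⟨c, by omega⟩ : ℝ) : ℂ) • v}
      = (fun u : Fin N₂ → ℂ => Fin.append (0 : Fin N₁ → ℂ) u) ''
          {u : Fin N₂ → ℂ | B.mulVec u = ((eigs B ⟨0, hN₂⟩ : ℝ) : ℂ) • u}) := by
    ext v
    simp only [Set.mem_setOf_eq, Set.mem_image, hμC]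
    constructor
    · intro hv
      rw [hmv v] at hv
      have hw : ∀ s, (Matrix.fromBlocks A 0 0 B).mulVec (v ∘ ⇑finSumFinEquiv) s
          = (μ : ℂ) • (v ∘ ⇑finSumFinEquiv) s := by
        intro s
        have h1 := congrFun hv (finSumFinEquiv s)
        simpa using h1
      have hv1 : A.mulVec (v ∘ ⇑finSumFinEquiv ∘ Sum.inl)
          = (μ : ℂ) • (v ∘ ⇑finSumFinEquiv ∘ Sum.inl) := by
        funext i
        have := hw (Sum.inl i)
        simpa [Matrix.fromBlocks_mulVec, Function.comp_assoc] using this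
      have hv2 : B.mulVec (v ∘ ⇑finSumFinEquiv ∘ Sum.inr)
          = (μ : ℂ) • (v ∘ ⇑finSumFinEquiv ∘ Sum.inr) := by
        funext j
        have := hw (Sum.inr j)
        simpa [Matrix.fromBlocks_mulVec, Function.comp_assoc] using this
      have h0 : (v ∘ ⇑finSumFinEquiv ∘ Sum.inl) = 0 := hAnone _ hv1
      refine ⟨v ∘ ⇑finSumFinEquiv ∘ Sum.inr, hv2, ?_⟩
      rw [append_eq_elim]
      funext k
      rcases hs : finSumFinEquiv.symm k with i | j
      · have hk2 : finSumFinEquiv (Sum.inl i) = k := by rw [← hs, Equiv.apply_symm_apply]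
        have := congrFun h0 i
        simp only [Function.comp_apply, hk2] at this
        simp [hs, this]
      · have hk2 : finSumFinEquiv (Sum.inr j) = k := by rw [← hs, Equiv.apply_symm_apply]
        simp [hs, hk2]
    · rintro ⟨u, hu, rfl⟩
      rw [hmv]
      have hcomp : (Fin.append (0 : Fin N₁ → ℂ) u) ∘ ⇑finSumFinEquiv = Sum.elim (0 : Fin N₁ → ℂ) u := by
        rw [append_eq_elim]
        funext s
        simp
      rw [hcomp]
      funext k
      rw [append_eq_elim]
      rcases hs : finSumFinEquiv.symm k with i | j <;>
        simp [Matrix.fromBlocks_mulVec, hs, hu, Matrix.zero_mulVec, Matrix.mulVec_zero,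
          Pi.smul_apply, hμdef]
  have hpart2 : ∀ u : EuclideanSpace ℂ (Fin N₂), ‖u‖ = 1 →
      ‖Submodule.orthogonalProjectionOnto
          (eigSpace (blockDiag A B) (eigs (blockDiag A B) ⟨c, by omega⟩))
          (embed₂ (N₁ := N₁) u)‖ ^ 2
        = ‖Submodule.orthogonalProjectionOnto (eigSpace B (eigs B ⟨0, hN₂⟩)) u‖ ^ 2 := by
    have hspace : eigSpace (blockDiag A B) (eigs (blockDiag A B) ⟨c, by omega⟩)
        = Submodule.map (embedL N₁ N₂) (eigSpace B μ) := by
      ext x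
      rw [mem_eigSpace_iff, Submodule.mem_map]
      have h1 := Set.ext_iff.mp hset x.ofLp
      simp only [Set.mem_setOf_eq, Set.mem_image] at h1
      constructor
      · intro hx
        obtain ⟨u, hu, hux⟩ := h1.mp hx
        exact ⟨WithLp.toLp 2 u, (mem_eigSpace_iff B μ _).mpr hu, congrArg (WithLp.toLp 2) hux⟩
      · rintro ⟨u, hu, rfl⟩
        exact h1.mpr ⟨u.ofLp, (mem_eigSpace_iff B μ u).mp hu, rfl⟩
    have hproj : ∀ u : EuclideanSpace ℂ (Fin N₂),
        ((Submodule.orthogonalProjectionOnto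
            (eigSpace (blockDiag A B) (eigs (blockDiag A B) ⟨c, by omega⟩))
            (embed₂ (N₁ := N₁) u)) : EuclideanSpace ℂ (Fin (N₁ + N₂)))
          = embed₂ (N₁ := N₁)
              ((Submodule.orthogonalProjectionOnto (eigSpace B μ) u : EuclideanSpace ℂ (Fin N₂))) := by
      intro u
      apply Submodule.eq_starProjection_of_mem_of_inner_eq_zero
      · rw [hspace]
        exact ⟨_, (Submodule.orthogonalProjectionOnto (eigSpace B μ) u).2, rfl⟩
      · intro w hw
        rw [hspace] at hw
        obtain ⟨y, hy, rfl⟩ := hw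
        have hsub : embed₂ (N₁ := N₁) u
              - embed₂ (N₁ := N₁) ((Submodule.orthogonalProjectionOnto (eigSpace B μ) u :
                  EuclideanSpace ℂ (Fin N₂)))
            = embed₂ (N₁ := N₁) (u - (Submodule.orthogonalProjectionOnto (eigSpace B μ) u :
                EuclideanSpace ℂ (Fin N₂))) := by
          have := (embedL N₁ N₂).map_sub u
            ((Submodule.orthogonalProjectionOnto (eigSpace B μ) u : EuclideanSpace ℂ (Fin N₂)))
          exact this.symm
        rw [hsub]
        have : (embedL N₁ N₂) y = embed₂ (N₁ := N₁) y := rfl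
        rw [this, inner_embed]
        exact Submodule.starProjection_inner_eq_zero u y hy
    intro u _
    calc ‖Submodule.orthogonalProjectionOnto
            (eigSpace (blockDiag A B) (eigs (blockDiag A B) ⟨c, by omega⟩))
            (embed₂ (N₁ := N₁) u)‖ ^ 2
        = ‖((Submodule.orthogonalProjectionOnto
            (eigSpace (blockDiag A B) (eigs (blockDiag A B) ⟨c, by omega⟩))
            (embed₂ (N₁ := N₁) u)) : EuclideanSpace ℂ (Fin (N₁ + N₂)))‖ ^ 2 := by
          rw [Submodule.norm_coe]
      _ = ‖embed₂ (N₁ := N₁)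
            ((Submodule.orthogonalProjectionOnto (eigSpace B μ) u : EuclideanSpace ℂ (Fin N₂)))‖ ^ 2 := by
          rw [hproj u]
      _ = ‖(Submodule.orthogonalProjectionOnto (eigSpace B μ) u : EuclideanSpace ℂ (Fin N₂))‖ ^ 2 := by
          rw [norm_embed]
      _ = ‖Submodule.orthogonalProjectionOnto (eigSpace B (eigs B ⟨0, hN₂⟩)) u‖ ^ 2 := by
          rw [Submodule.norm_coe]
  refine ⟨hset, hpart2, fun δ u hu hδ => ?_⟩
  rw [hpart2 u hu]
  exact hδ
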